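/- Every relatively separated subset of ℂ is a finite union of uniformly separated subsets. -/

import Mathlib

open Metric

/-- `Λ` is relatively separated: disks of radius 1 contain a uniformly bounded
number of points of `Λ`. -/
def RelativelySeparated (Λ : Set ℂ) : Prop :=
  ∃ N : ℕ, ∀ z : ℂ, (Λ ∩ Metric.ball z 1).Finite ∧ (Λ ∩ Metric.ball z 1).ncard ≤ N

/-- `Λ` is uniformly separated: distinct points are at distance at least `ρ > 0`. -/
def UniformlySeparated (Λ : Set ℂ) : Prop :=
  ∃ ρ : ℝ, 0 < ρ ∧ ∀ x ∈ Λ, ∀ y ∈ Λ, x ≠ y → ρ ≤ dist x y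

/-- Every relatively separated subset of `ℂ` is a finite union of uniformly
separated subsets. -/
theorem relativelySeparated_iUnion_uniformlySeparated
    (Λ : Set ℂ) (hΛ : RelativelySeparated Λ) :
    ∃ (n : ℕ) (Λs : Fin n → Set ℂ),
      Λ = ⋃ i, Λs i ∧ ∀ i, UniformlySeparated (Λs i) := by
  classical
  obtain ⟨N, hN⟩ := hΛ
  -- squares of side 1/2
  set sq : ℂ → ℤ × ℤ := fun z => (⌊2 * z.re⌋, ⌊2 * z.im⌋) with hsq
  set S : ℤ × ℤ → Set ℂ := fun p => {z ∈ Λ | sq z = p} with hS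
  -- each square piece is contained in a unit ball
  have hsub : ∀ p : ℤ × ℤ, S p ⊆ Λ ∩ Metric.ball (Complex.mk ((2*p.1+1)/4) ((2*p.2+1)/4)) 1 := by
    rintro p z ⟨hzΛ, hz⟩
    refine ⟨hzΛ, ?_⟩
    have h1 : (⌊2 * z.re⌋ : ℤ) = p.1 := congrArg Prod.fst hz
    have h2 : (⌊2 * z.im⌋ : ℤ) = p.2 := congrArg Prod.snd hz
    have hr1 : (p.1 : ℝ) ≤ 2 * z.re := h1 ▸ Int.floor_le _
    have hr2 : 2 * z.re < p.1 + 1 := h1 ▸ Int.lt_floor_add_one _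
    have hi1 : (p.2 : ℝ) ≤ 2 * z.im := h2 ▸ Int.floor_le _
    have hi2 : 2 * z.im < p.2 + 1 := h2 ▸ Int.lt_floor_add_one _
    rw [mem_ball, Complex.dist_eq]
    have hre : |(z - Complex.mk ((2*p.1+1)/4) ((2*p.2+1)/4)).re| ≤ 1/4 := by
      simp only [Complex.sub_re]
      rw [abs_le]; constructor <;> [nlinarith; nlinarith]
    have him : |(z - Complex.mk ((2*p.1+1)/4) ((2*p.2+1)/4)).im| ≤ 1/4 := by
      simp only [Complex.sub_im]
      rw [abs_le]; constructor <;> [nlinarith; nlinarith]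
    calc ‖_‖ ≤ _ := Complex.norm_le_abs_re_add_abs_im _
      _ < 1 := by linarith
  have hSfin : ∀ p, (S p).Finite := fun p =>
    ((hN _).1).subset (hsub p)
  have hScard : ∀ p, (S p).ncard ≤ N := fun p =>
    le_trans (Set.ncard_le_ncard (hsub p) (hN _).1) (hN _).2
  -- choose an injection from each square piece into Fin (N+1)
  have hemb : ∀ p : ℤ × ℤ, Nonempty (S p ↪ Fin (N+1)) := by
    intro p
    have hfin := (hSfin p).fintype
    apply Function.Embedding.nonempty_of_card_le
    rw [Fintype.card_fin]
    have h1 : Fintype.card (S p) = Nat.card (S p) := Nat.card_eq_fintype_card.symm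
    have h2 : Nat.card (S p) = (S p).ncard := Nat.card_coe_set_eq _
    have h3 := hScard p
    omega
  have g : ∀ p : ℤ × ℤ, S p ↪ Fin (N+1) := fun p => (hemb p).some
  set idx : ℂ → Fin (N+1) := fun z =>
    if h : z ∈ Λ then g (sq z) ⟨z, h, rfl⟩ else 0 with hidx
  set C := (ZMod 2 × ZMod 2) × Fin (N+1)
  set col : ℂ → C := fun z =>
    (((⌊2 * z.re⌋ : ZMod 2), (⌊2 * z.im⌋ : ZMod 2)), idx z) with hcol
  set e : Fin (Fintype.card C) ≃ C := (Fintype.equivFin C).symm with he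
  refine ⟨Fintype.card C, fun i => {z ∈ Λ | col z = e i}, ?_, ?_⟩
  · ext z
    simp only [Set.mem_iUnion, Set.mem_setOf_eq]
    constructor
    · intro hz
      exact ⟨e.symm (col z), hz, (e.apply_symm_apply _).symm⟩
    · rintro ⟨i, hz, -⟩; exact hz
  · intro i
    refine ⟨1/2, by norm_num, ?_⟩
    rintro x ⟨hxΛ, hxc⟩ y ⟨hyΛ, hyc⟩ hxy
    have hcc : col x = col y := hxc.trans hyc.symm
    have hidxeq : idx x = idx y := congrArg Prod.snd hcc
    have hz1 : ((⌊2 * x.re⌋ : ℤ) : ZMod 2) = ((⌊2 * y.re⌋ : ℤ) : ZMod 2) :=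
      congrArg (fun c => c.1.1) hcc
    have hz2 : ((⌊2 * x.im⌋ : ℤ) : ZMod 2) = ((⌊2 * y.im⌋ : ℤ) : ZMod 2) :=
      congrArg (fun c => c.1.2) hcc
    have gcast : ∀ (p q : ℤ × ℤ) (hpq : p = q) (z : ℂ) (hz : z ∈ S p),
        g p ⟨z, hz⟩ = g q ⟨z, hpq ▸ hz⟩ := by
      rintro p q rfl z hz; rfl
    -- case: same square impossible
    have hsqne : sq x ≠ sq y := by
      intro hsqeq
      apply hxy
      have e1 : idx x = g (sq x) ⟨x, hxΛ, rfl⟩ := dif_pos hxΛ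
      have e2 : idx y = g (sq y) ⟨y, hyΛ, rfl⟩ := dif_pos hyΛ
      have e3 : g (sq y) ⟨y, hyΛ, rfl⟩ = g (sq x) ⟨y, hsqeq.symm ▸ ⟨hyΛ, rfl⟩⟩ :=
        gcast (sq y) (sq x) hsqeq.symm y ⟨hyΛ, rfl⟩
      rw [e1, e2, e3] at hidxeq
      exact congrArg Subtype.val ((g (sq x)).injective hidxeq)
    -- so floors differ in some coordinate, by a multiple of 2
    have key : ∀ a b : ℝ, (⌊a⌋ : ZMod 2) = (⌊b⌋ : ZMod 2) → ⌊a⌋ ≠ ⌊b⌋ → 1 < |a - b| := by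
      intro a b hmod hne
      have hdvd : ⌊a⌋ % 2 = ⌊b⌋ % 2 := (ZMod.intCast_eq_intCast_iff' _ _ _).mp hmod
      have hcase : ⌊a⌋ + 2 ≤ ⌊b⌋ ∨ ⌊b⌋ + 2 ≤ ⌊a⌋ := by omega
      have hfa := Int.floor_le a
      have hfb := Int.floor_le b
      have hla := Int.lt_floor_add_one a
      have hlb := Int.lt_floor_add_one b
      rw [lt_abs]
      rcases hcase with h | h
      · right
        have : (⌊a⌋ : ℝ) + 2 ≤ ⌊b⌋ := by exact_mod_cast h
        linarith
      · left
        have : (⌊b⌋ : ℝ) + 2 ≤ ⌊a⌋ := by exact_mod_cast h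
        linarith
    have hdist : ∀ a b : ℝ, 1 < |2 * a - 2 * b| → 1/2 ≤ |a - b| := by
      intro a b h
      have h2 : |2 * a - 2 * b| = 2 * |a - b| := by
        rw [show (2:ℝ) * a - 2 * b = 2 * (a - b) by ring, abs_mul, abs_two]
      rw [h2] at h
      linarith
    have hcases : ⌊2 * x.re⌋ ≠ ⌊2 * y.re⌋ ∨ ⌊2 * x.im⌋ ≠ ⌊2 * y.im⌋ := by
      by_contra h
      push_neg at h
      exact hsqne (Prod.ext h.1 h.2)
    rw [Complex.dist_eq]
    rcases hcases with h | h
    · have := hdist _ _ (key _ _ hz1 h)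
      have hre : |(x - y).re| ≤ ‖x - y‖ := Complex.abs_re_le_norm _
      simp only [Complex.sub_re] at hre
      have : (2:ℝ) * x.re - 2 * y.re = 2 * (x.re - y.re) := by ring
      calc (1:ℝ)/2 ≤ |x.re - y.re| := by
            apply hdist; exact key _ _ hz1 h
        _ ≤ _ := hre
    · have hre : |(x - y).im| ≤ ‖x - y‖ := Complex.abs_im_le_norm _
      simp only [Complex.sub_im] at hre
      calc (1:ℝ)/2 ≤ |x.im - y.im| := by
            apply hdist; exact key _ _ hz2 h
        _ ≤ _ := hre
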